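/- For any R-algebra A with R finite-dimensional semisimple, the relative de Rham complex Ω•_R A (the tensor algebra of Ω¹_R A over A with differential d) is acyclic in positive degrees: for every k ≥ 1, the closed k-forms coincide with the exact ones, i.e. ker(d: Ω^k_R A → Ω^{k+1}_R A) = d(Ω^{k-1}_R A). -/

import Mathlib

open TensorProduct

universe u

open Finset in
theorem aux_dualpairs (k R : Type u) [Field k] [CharZero k] [Ring R] [Algebra k R]
    [FiniteDimensional k R] [IsSemisimpleRing R] :
    ∃ (m : ℕ) (x y : Fin m → R),
      (∑ i, x i * y i = 1) ∧
      ∀ (V : Type u) (_ : AddCommGroup V) (_ : Module k V) (β : R →ₗ[k] R →ₗ[k] V) (s : R),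
        ∑ i, β (s * x i) (y i) = ∑ i, β (x i) (y i * s) := by
  classical
  set L : R →ₐ[k] Module.End k R := Algebra.lmul k R with hLdef
  have Lapp : ∀ (u v : R), L u v = u * v := fun _ _ => rfl
  set T : R →ₗ[k] R →ₗ[k] k := LinearMap.mk₂ k
      (fun u v => LinearMap.trace k R (L u ∘ₗ L v))
      (by intro u u' v; rw [map_add, LinearMap.add_comp, map_add])
      (by intro t u v; rw [map_smul, LinearMap.smul_comp, map_smul])
      (by intro u v v'; rw [map_add, LinearMap.comp_add, map_add])
      (by intro t u v; rw [map_smul, LinearMap.comp_smul, map_smul])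
    with hTdef
  have Tapp : ∀ u v, T u v = LinearMap.trace k R (L u ∘ₗ L v) := fun _ _ => rfl
  have Tsymm : ∀ u v, T u v = T v u := by
    intro u v; rw [Tapp, Tapp, LinearMap.trace_comp_comm']
  have Tassoc : ∀ u v w, T (u * v) w = T u (v * w) := by
    intro u v w
    rw [Tapp, Tapp, map_mul, map_mul, ← Module.End.mul_eq_comp, ← Module.End.mul_eq_comp,
      mul_assoc]

  let I : Ideal R :=
    { carrier := {x : R | ∀ y, T x y = 0}
      add_mem' := by
        intro a b ha hb
        simp only [Set.mem_setOf_eq] at ha hb ⊢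
        intro y
        rw [map_add, LinearMap.add_apply, ha y, hb y, add_zero]
      zero_mem' := by
        simp only [Set.mem_setOf_eq]
        intro y
        rw [map_zero, LinearMap.zero_apply]
      smul_mem' := by
        intro c x hx
        simp only [Set.mem_setOf_eq] at hx ⊢
        intro y
        have h1 : T (c • x) y = T x (y * c) := by
          rw [smul_eq_mul, Tsymm (c * x) y, ← Tassoc, Tsymm]
        rw [h1]; exact hx _ }
  have hnd : LinearMap.BilinForm.Nondegenerate T := by
    obtain ⟨e, he, hIe⟩ := IsSemisimpleRing.ideal_eq_span_idempotent I
    refine LinearMap.BilinForm.Nondegenerate.ofSeparatingLeft ?_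
    intro v hv
    have hvI : v ∈ I := hv
    by_cases he0 : e = 0
    · rw [he0] at hIe
      rw [hIe, Ideal.span_singleton_eq_bot.mpr rfl] at hvI
      exact (Submodule.mem_bot R).mp hvI
    · exfalso
      have heI : e ∈ I := by rw [hIe]; exact Ideal.mem_span_singleton_self e
      have hTee : T e e = 0 := heI e
      have hcomp : L e ∘ₗ L e = L e := by
        rw [← Module.End.mul_eq_comp, ← map_mul, he.eq]
      obtain ⟨p, hp⟩ := (LinearMap.isProj_iff_isIdempotentElem (L e)).mpr hcomp
      have htr : T e e = (Module.finrank k p : k) := by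
        rw [Tapp, hcomp]
        exact hp.trace
      have hep : e ∈ p := by
        have h2 := hp.map_mem e
        rwa [Lapp, he.eq] at h2
      have h0 : (Module.finrank k p : k) = 0 := by rw [← htr, hTee]
      have h3 : Module.finrank k p = 0 := Nat.cast_eq_zero.mp h0
      rw [Submodule.finrank_eq_zero] at h3
      rw [h3] at hep
      exact he0 ((Submodule.mem_bot k).mp hep)
  let b : Module.Basis (Fin (Module.finrank k R)) k R := Module.finBasis k R
  let c := LinearMap.BilinForm.dualBasis T hnd b
  have hsym : T.IsSymm := by constructor; intro u v; simpa using Tsymm u v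
  have hTbc : ∀ i j, T (b i) (c j) = if i = j then 1 else 0 :=
    fun i j => LinearMap.BilinForm.apply_dualBasis_right hnd (LinearMap.BilinForm.isSymm_iff.mpr hsym) b i j
  have E1 : ∀ v : R, ∑ i, T v (b i) • c i = v := by
    intro v
    have h := c.sum_repr v
    rw [Finset.sum_congr rfl
      (fun i _ => by rw [LinearMap.BilinForm.dualBasis_repr_apply hnd b v i])] at h
    exact h
  have E2 : ∀ v : R, ∑ i, T v (c i) • b i = v := by
    let F : R →ₗ[k] R :=
      { toFun := fun v => ∑ i, T v (c i) • b i
        map_add' := by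
          intro u v
          rw [← Finset.sum_add_distrib]
          refine Finset.sum_congr rfl fun i _ => ?_
          rw [map_add, LinearMap.add_apply, add_smul]
        map_smul' := by
          intro t v
          rw [Finset.smul_sum]
          refine Finset.sum_congr rfl fun i _ => ?_
          rw [map_smul, LinearMap.smul_apply, smul_assoc]; rfl }
    have hF : F = LinearMap.id := by
      refine b.ext fun j => ?_
      show ∑ i, T (b j) (c i) • b i = LinearMap.id (b j)
      simp only [hTbc, LinearMap.id_apply]
      simp [ite_smul]
    intro v
    have h := congrArg (fun (G : R →ₗ[k] R) => G v) hF
    exact h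
  have R2 : ∀ (v : R) (i : Fin (Module.finrank k R)), b.repr v i = T v (c i) := by
    intro v i
    have h : (b.coord i : R →ₗ[k] k) = T.flip (c i) := by
      refine b.ext fun j => ?_
      rw [Module.Basis.coord_apply, Module.Basis.repr_self_apply, LinearMap.flip_apply, hTbc j i]
    rw [← Module.Basis.coord_apply, h, LinearMap.flip_apply]
  have hcentral : ∀ (V : Type u) (_ : AddCommGroup V) (_ : Module k V)
      (β : R →ₗ[k] R →ₗ[k] V) (s : R),
      ∑ i, β (s * b i) (c i) = ∑ i, β (b i) (c i * s) := by
    intro V _ _ β s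
    have hL2 : ∀ i, β (s * b i) (c i) = ∑ j, T (s * b i) (c j) • β (b j) (c i) := by
      intro i
      conv_lhs => rw [← E2 (s * b i)]
      rw [map_sum, LinearMap.sum_apply]
      refine Finset.sum_congr rfl fun j _ => ?_
      rw [map_smul, LinearMap.smul_apply]
    have hR2' : ∀ i, β (b i) (c i * s) = ∑ j, T (c i * s) (b j) • β (b i) (c j) := by
      intro i
      conv_lhs => rw [← E1 (c i * s)]
      rw [map_sum]
      refine Finset.sum_congr rfl fun j _ => ?_
      rw [map_smul]
    calc ∑ i, β (s * b i) (c i) = ∑ i, ∑ j, T (s * b i) (c j) • β (b j) (c i) :=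
          Finset.sum_congr rfl fun i _ => hL2 i
      _ = ∑ i, ∑ j, T (c j * s) (b i) • β (b j) (c i) := by
          refine Finset.sum_congr rfl fun i _ => Finset.sum_congr rfl fun j _ => ?_
          rw [Tsymm (s * b i) (c j), ← Tassoc]
      _ = ∑ j, ∑ i, T (c j * s) (b i) • β (b j) (c i) := Finset.sum_comm
      _ = ∑ i, β (b i) (c i * s) := Finset.sum_congr rfl fun j _ => (hR2' j).symm
  have htrace : ∀ z : R, ∑ i, T (z * b i) (c i) = T 1 z := by
    intro z
    have h1 : T 1 z = LinearMap.trace k R (L z) := by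
      rw [Tapp, map_one, Module.End.one_eq_id, LinearMap.id_comp]
    have h2 : LinearMap.trace k R (L z) = ∑ i, b.repr (z * b i) i := by
      rw [LinearMap.trace_eq_matrix_trace k b]
      rw [Matrix.trace]
      refine Finset.sum_congr rfl fun i _ => ?_
      rw [Matrix.diag_apply, LinearMap.toMatrix_apply, Lapp]
    calc ∑ i, T (z * b i) (c i) = ∑ i, b.repr (z * b i) i :=
          Finset.sum_congr rfl fun i _ => (R2 _ i).symm
      _ = LinearMap.trace k R (L z) := h2.symm
      _ = T 1 z := h1.symm
  have haID : ∑ i, b i * c i = 1 := by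
    have hz : ∀ z, T (∑ i, b i * c i - 1) z = 0 := by
      intro z
      rw [map_sub, LinearMap.sub_apply, sub_eq_zero, map_sum, LinearMap.sum_apply]
      calc ∑ i, T (b i * c i) z = ∑ i, T (b i) (c i * z) :=
            Finset.sum_congr rfl fun i _ => Tassoc _ _ _
        _ = ∑ i, T (z * b i) (c i) := (hcentral k inferInstance inferInstance T z).symm
        _ = T 1 z := htrace z
    exact sub_eq_zero.mp (hnd.1 _ hz)
  exact ⟨_, fun i => b i, fun i => c i, haID, hcentral⟩

theorem aux_eps (k R A : Type u) [Field k] [CharZero k] [Ring R] [Algebra k R]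
    [FiniteDimensional k R] [IsSemisimpleRing R] [Ring A] [Algebra k A] (f : R →ₐ[k] A) :
    ∃ ε : A →ₗ[k] A, (∀ r, ε (f r) = f r) ∧ (∀ (r : R) (w : A), ε (f r * w) = f r * ε w) ∧
      (∀ (r : R) (w : A), ε (w * f r) = ε w * f r) ∧ (∀ w, ∃ r, ε w = f r) := by
  classical
  obtain ⟨m, x, y, hxy1, hcen⟩ := aux_dualpairs k R
  letI : Module R A := Module.compHom A f.toRingHom
  have hsmul : ∀ (r : R) (a : A), r • a = f r * a := fun r a => rfl
  have hks : ∀ (t : k) (a : A), t • a = (algebraMap k R t) • a := by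
    intro t a
    rw [hsmul, f.commutes t, ← Algebra.smul_def]
  let M₀ : Submodule R A := Submodule.span R ({1} : Set A)
  have hmem : ∀ r : R, f r ∈ M₀ := by
    intro r
    have h : f r = r • (1 : A) := by rw [hsmul, mul_one]
    rw [h]
    exact Submodule.smul_mem _ r (Submodule.mem_span_singleton_self 1)
  obtain ⟨q, hq⟩ := exists_isCompl M₀
  set pr := M₀.projectionOnto q hq with hprdef
  let p : A → A := fun a => ↑(pr a)
  have hp_mem : ∀ a, p a ∈ M₀ := fun a => (pr a).2
  have hp_f : ∀ r : R, p (f r) = f r := by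
    intro r
    have h := Submodule.linearProjOfIsCompl_apply_left hq ⟨f r, hmem r⟩
    show ↑(pr ((⟨f r, hmem r⟩ : M₀) : A)) = f r
    rw [h]
  have hp_add : ∀ a b, p (a + b) = p a + p b := by intro a b; simp only [p]; rw [map_add]; rfl
  have hp_smulR : ∀ (r : R) (a : A), p (r • a) = r • p a := by
    intro r a; simp only [p]; rw [map_smul]; rfl
  have hp_mul : ∀ (r : R) (a : A), p (f r * a) = f r * p a := by
    intro r a
    rw [← hsmul, hp_smulR, hsmul]
  have hp_smulk : ∀ (t : k) (a : A), p (t • a) = t • p a := by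
    intro t a
    rw [hks, hp_smulR, ← hks]
  have hp_range : ∀ a, ∃ r, p a = f r := by
    intro a
    obtain ⟨r, hr⟩ := Submodule.mem_span_singleton.mp (hp_mem a)
    exact ⟨r, by rw [← hr, hsmul, mul_one]⟩
  let ε : A →ₗ[k] A :=
    { toFun := fun w => ∑ i, p (w * f (x i)) * f (y i)
      map_add' := by
        intro u v
        rw [← Finset.sum_add_distrib]
        refine Finset.sum_congr rfl fun i _ => ?_
        rw [add_mul, hp_add, add_mul]
      map_smul' := by
        intro t v
        rw [Finset.smul_sum]
        refine Finset.sum_congr rfl fun i _ => ?_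
        rw [smul_mul_assoc, hp_smulk, smul_mul_assoc]; rfl }
  have hεapp : ∀ w, ε w = ∑ i, p (w * f (x i)) * f (y i) := fun _ => rfl
  have hε1 : ∀ r, ε (f r) = f r := by
    intro r
    rw [hεapp]
    calc ∑ i, p (f r * f (x i)) * f (y i) = ∑ i, f (r * x i * y i) := by
          refine Finset.sum_congr rfl fun i _ => ?_
          rw [← map_mul f, hp_f, ← map_mul f]
      _ = f (∑ i, r * x i * y i) := (map_sum f _ _).symm
      _ = f r := by
          rw [show ∑ i, r * x i * y i = r * ∑ i, x i * y i by
            rw [Finset.mul_sum]; exact Finset.sum_congr rfl fun i _ => mul_assoc _ _ _]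
          rw [hxy1, mul_one]
  have hε2 : ∀ (r : R) (w : A), ε (f r * w) = f r * ε w := by
    intro r w
    rw [hεapp, hεapp, Finset.mul_sum]
    refine Finset.sum_congr rfl fun i _ => ?_
    rw [mul_assoc (f r) w (f (x i)), hp_mul, mul_assoc]
  have hε3 : ∀ (r : R) (w : A), ε (w * f r) = ε w * f r := by
    intro r w
    let β : R →ₗ[k] R →ₗ[k] A := LinearMap.mk₂ k (fun u v => p (w * f u) * f v)
      (by intro u u' v; rw [map_add f, mul_add, hp_add, add_mul])
      (by intro t u v
          rw [map_smul f, mul_smul_comm, hp_smulk, smul_mul_assoc])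
      (by intro u v v'; rw [map_add f, mul_add])
      (by intro t u v; rw [map_smul f, mul_smul_comm])
    have hβ : ∀ u v, β u v = p (w * f u) * f v := fun _ _ => rfl
    have h := hcen A inferInstance inferInstance β r
    calc ε (w * f r) = ∑ i, β (r * x i) (y i) := by
          rw [hεapp]
          refine Finset.sum_congr rfl fun i _ => ?_
          rw [hβ, map_mul f, ← mul_assoc]
      _ = ∑ i, β (x i) (y i * r) := h
      _ = ε w * f r := by
          rw [hεapp, Finset.sum_mul]
          refine Finset.sum_congr rfl fun i _ => ?_
          rw [hβ, map_mul f, mul_assoc]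
  have hε4 : ∀ w, ∃ r, ε w = f r := by
    intro w
    have h := fun i => hp_range (w * f (x i))
    choose rr hrr using h
    refine ⟨∑ i, rr i * y i, ?_⟩
    rw [hεapp, map_sum f]
    refine Finset.sum_congr rfl fun i _ => ?_
    rw [hrr i, map_mul f]
  exact ⟨ε, hε1, hε2, hε3, hε4⟩

/-- For any `R`-algebra `A` with `R` finite-dimensional semisimple, the
relative de Rham complex `Ω•_R A` is acyclic in positive degrees: for every `k ≥ 1`,
closed `k`-forms coincide with exact ones.

The DG algebra `(W, 𝒜, ιA, d, σ)` is the algebra `Ω•_R A` of relative noncommutative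
differential forms: this is expressed by the spanning condition `hspan` (every `n`-form
is a combination of forms `a₀ da₁ ⋯ daₙ`) together with the universal property `huniv`
(`Ω^n_R A ≅ A ⊗_R (A/R)^{⊗_R n}`: linear maps out of `𝒜 n` correspond exactly to
`R`-balanced multilinear maps vanishing when one of the last `n` arguments is in `R`). -/
theorem stmt7 (k R A W : Type u) [Field k] [CharZero k]
    [Ring R] [Algebra k R] [FiniteDimensional k R] [IsSemisimpleRing R]
    [Ring A] [Algebra k A] (f : R →ₐ[k] A)
    [Ring W] [Algebra k W]
    (𝒜 : ℕ → Submodule k W) [GradedAlgebra 𝒜]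
    (ιA : A →ₐ[k] W) (d σ : W →ₗ[k] W)
    (hι0 : ∀ a : A, ιA a ∈ 𝒜 0)
    (hdg : ∀ (n : ℕ), ∀ w ∈ 𝒜 n, d w ∈ 𝒜 (n + 1))
    (hσ : ∀ (n : ℕ), ∀ w ∈ 𝒜 n, σ w = ((-1 : k) ^ n) • w)
    (hdd : ∀ w : W, d (d w) = 0)
    (hdLeib : ∀ x y : W, d (x * y) = d x * y + σ x * d y)
    (hdR : ∀ r : R, d (ιA (f r)) = 0)
    (hspan : ∀ n : ℕ, 𝒜 n ≤ Submodule.span k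
        {w : W | ∃ a : Fin (n + 1) → A,
          w = ιA (a 0) * (List.ofFn fun j : Fin n => d (ιA (a j.succ))).prod})
    (huniv : ∀ (n : ℕ) (V : Type u), ∀ (_ : AddCommGroup V) (_ : Module k V),
      ∀ φ : MultilinearMap k (fun _ : Fin (n + 1) => A) V,
        (∀ (a : Fin (n + 1) → A) (j : Fin n) (r : R),
            φ (Function.update a j.castSucc (a j.castSucc * f r))
              = φ (Function.update a j.succ (f r * a j.succ))) →
        (∀ (a : Fin (n + 1) → A) (j : Fin n), a j.succ ∈ Set.range f → φ a = 0) →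
        ∃! Φ : W →ₗ[k] V,
          (∀ a : Fin (n + 1) → A,
            Φ (ιA (a 0) * (List.ofFn fun j : Fin n => d (ιA (a j.succ))).prod) = φ a) ∧
          (∀ m : ℕ, m ≠ n → ∀ w ∈ 𝒜 m, Φ w = 0)) :
    ∀ (n : ℕ), ∀ ω ∈ 𝒜 (n + 1), d ω = 0 → ∃ η ∈ 𝒜 n, d η = ω := by
  classical
  obtain ⟨ε, hε1, hε2, hε3, hε4⟩ := aux_eps k R A f
  -- basic consequences of the DG axioms
  have hσ0 : ∀ a : A, σ (ιA a) = ιA a := by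
    intro a; have h := hσ 0 _ (hι0 a); simpa using h
  have hdεzero : ∀ w : A, d (ιA (ε w)) = 0 := by
    intro w; obtain ⟨r, hr⟩ := hε4 w; rw [hr]; exact hdR r
  have hd1 : d (1 : W) = 0 := by
    have h := hdR 1; rwa [map_one, map_one] at h
  have hσd : ∀ a : A, σ (d (ιA a)) = -(d (ιA a)) := by
    intro a; have h := hσ 1 _ (hdg 0 _ (hι0 a)); simpa using h
  have hdmul0 : ∀ (x : A) (u : W), d (ιA x * u) = d (ιA x) * u + ιA x * d u := by
    intro x u; rw [hdLeib, hσ0]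
  have hdxf : ∀ (x : A) (r : R), d (ιA (x * f r)) = d (ιA x) * ιA (f r) := by
    intro x r; rw [map_mul, hdmul0, hdR, mul_zero, add_zero]
  have hdfx : ∀ (r : R) (x : A), d (ιA (f r * x)) = ιA (f r) * d (ιA x) := by
    intro r x; rw [map_mul, hdmul0, hdR, zero_mul, zero_add]
  have hε1' : ε (1 : A) = 1 := by
    have h := hε1 1; rwa [map_one] at h
  -- products of exact one-forms
  have hPdmem : ∀ (q : ℕ) (v : Fin q → A),
      (List.ofFn fun j => d (ιA (v j))).prod ∈ 𝒜 q := by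
    intro q
    induction q with
    | zero => intro v; rw [List.ofFn_zero, List.prod_nil]; exact SetLike.one_mem_graded 𝒜
    | succ q ih =>
      intro v
      rw [List.ofFn_succ, List.prod_cons]
      have h1 : d (ιA (v 0)) ∈ 𝒜 1 := hdg 0 _ (hι0 (v 0))
      have h2 := SetLike.mul_mem_graded h1 (ih fun j => v j.succ)
      rwa [Nat.add_comm 1 q] at h2
  have hdPd : ∀ (q : ℕ) (v : Fin q → A),
      d (List.ofFn fun j => d (ιA (v j))).prod = 0 := by
    intro q
    induction q with
    | zero => intro v; rw [List.ofFn_zero, List.prod_nil]; exact hd1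
    | succ q ih =>
      intro v
      rw [List.ofFn_succ, List.prod_cons, hdLeib, hdd, hσd, ih (fun j => v j.succ),
        zero_mul, mul_zero, add_zero]
  -- generic list lemmas
  have ofFn3 : ∀ (q : ℕ) (v : Fin (q+1+1) → W),
      (List.ofFn v).prod
        = v 0 * (v (Fin.succ 0) * (List.ofFn fun i : Fin q => v i.succ.succ).prod) := by
    intro q v
    rw [List.ofFn_succ, List.prod_cons, List.ofFn_succ, List.prod_cons]
  have GL0 : ∀ (q : ℕ) (v : Fin q → W) (t : Fin q), v t = 0 → (List.ofFn v).prod = 0 := by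
    intro q
    induction q with
    | zero => intro v t; exact t.elim0
    | succ q ih =>
      intro v t
      refine Fin.cases ?_ (fun s => ?_) t
      · intro h0; rw [List.ofFn_succ, List.prod_cons, h0, zero_mul]
      · intro hs
        rw [List.ofFn_succ, List.prod_cons, ih (fun j => v j.succ) s hs, mul_zero]
  have upd_succ : ∀ (q : ℕ) (a : Fin (q+1) → A) (pos : Fin q) (x : A) (i : Fin q),
      Function.update a pos.succ x i.succ = Function.update (fun s : Fin q => a s.succ) pos x i := by
    intro q a pos x i
    by_cases h : i = pos
    · subst h; rw [Function.update_self, Function.update_self]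
    · rw [Function.update_of_ne (fun hh => h (Fin.succ_inj.mp hh)), Function.update_of_ne h]
  have GL1 : ∀ (q : ℕ) (g : Fin (q+1) → A → W),
      (∀ (i : Fin (q+1)) (x : A) (r : R), g i (x * f r) = g i x * ιA (f r)) →
      (∀ (i : Fin q) (x : A) (r : R), g i.succ (f r * x) = ιA (f r) * g i.succ x) →
      ∀ (a : Fin (q+1) → A) (j : Fin q) (r : R),
      (List.ofFn fun i => g i (Function.update a j.castSucc (a j.castSucc * f r) i)).prod
      = (List.ofFn fun i => g i (Function.update a j.succ (f r * a j.succ) i)).prod := by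
    intro q
    induction q with
    | zero => intro g _ _ a j; exact j.elim0
    | succ q ih =>
      intro g hg1 hg2 a j r
      have hsplit2 : ∀ v : Fin (q+1+1) → A, (List.ofFn fun i => g i (v i)).prod
          = g 0 (v 0) * (g (Fin.succ 0) (v (Fin.succ 0))
              * (List.ofFn fun i : Fin q => g i.succ.succ (v i.succ.succ)).prod) :=
        fun v => ofFn3 q (fun i => g i (v i))
      have hsplit : ∀ v : Fin (q+1+1) → A, (List.ofFn fun i => g i (v i)).prod
          = g 0 (v 0) * (List.ofFn fun i : Fin (q+1) => g i.succ (v i.succ)).prod := by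
        intro v; rw [List.ofFn_succ, List.prod_cons]
      refine Fin.cases ?_ (fun s => ?_) j
      · -- j = 0
        rw [Fin.castSucc_zero, hsplit2, hsplit2]
        have e1 : Function.update a 0 (a 0 * f r) 0 = a 0 * f r := Function.update_self _ _ _
        have e2 : ∀ i : Fin (q+1),
            Function.update a 0 (a 0 * f r) i.succ = a i.succ :=
          fun i => Function.update_of_ne (Fin.succ_ne_zero i) _ _
        have e3 : Function.update a (Fin.succ 0) (f r * a (Fin.succ 0)) 0 = a 0 :=
          Function.update_of_ne (Ne.symm (Fin.succ_ne_zero 0)) _ _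
        have e4 : Function.update a (Fin.succ 0) (f r * a (Fin.succ 0)) (Fin.succ 0)
            = f r * a (Fin.succ 0) := Function.update_self _ _ _
        have e5 : ∀ i : Fin q,
            Function.update a (Fin.succ 0) (f r * a (Fin.succ 0)) i.succ.succ = a i.succ.succ :=
          fun i => Function.update_of_ne (fun hh => Fin.succ_ne_zero i (Fin.succ_inj.mp hh)) _ _
        simp only [e1, e2, e3, e4, e5]
        rw [hg1 0 (a 0) r, hg2 0 (a (Fin.succ 0)) r]
        simp only [mul_assoc]
      · -- j = s.succ
        rw [← Fin.succ_castSucc, hsplit, hsplit]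
        have e0 : ∀ (p : Fin (q+1)) (x : A),
            Function.update a p.succ x 0 = a 0 :=
          fun p x => Function.update_of_ne (Ne.symm (Fin.succ_ne_zero p)) _ _
        simp only [e0, upd_succ]
        have hres := ih (fun i => g i.succ) (fun i x r' => hg1 i.succ x r')
          (fun i x r' => hg2 i.succ x r') (fun t => a t.succ) s r
        rw [hres]
  -- construction of the homotopy operators via the universal property
  have hH : ∀ (m' : ℕ), ∃ Φ : W →ₗ[k] W, ∀ a : Fin (m'+1+1) → A,
      Φ (ιA (a 0) * (List.ofFn fun j : Fin (m'+1) => d (ιA (a j.succ))).prod)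
        = ιA (ε (a 0)) * (ιA (a (Fin.succ 0) - ε (a (Fin.succ 0)))
            * (List.ofFn fun i : Fin m' => d (ιA (a i.succ.succ))).prod) := by
    intro m'
    let glin : Fin (m'+1+1) → (A →ₗ[k] W) :=
      Fin.cons (ιA.toLinearMap ∘ₗ ε)
        (Fin.cons (ιA.toLinearMap ∘ₗ (LinearMap.id - ε)) (fun _ => d ∘ₗ ιA.toLinearMap))
    have hg0 : ∀ x : A, glin 0 x = ιA (ε x) := by
      intro x; simp only [glin, Fin.cons_zero]; rfl
    have hgone : ∀ x : A, glin (Fin.succ 0) x = ιA (x - ε x) := by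
      intro x; simp only [glin, Fin.cons_succ, Fin.cons_zero]
      simp
    have hgtwo : ∀ (t : Fin m') (x : A), glin t.succ.succ x = d (ιA x) := by
      intro t x; simp only [glin, Fin.cons_succ]; rfl
    have V1 : ∀ (i : Fin (m'+1+1)) (x : A) (r : R), glin i (x * f r) = glin i x * ιA (f r) := by
      intro i
      refine Fin.cases ?_ (fun s => ?_) i
      · intro x r; rw [hg0, hg0, hε3, map_mul]
      · refine Fin.cases ?_ (fun t => ?_) s
        · intro x r; rw [hgone, hgone, hε3, ← sub_mul, map_mul]
        · intro x r; rw [hgtwo, hgtwo, hdxf]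
    have V2 : ∀ (i : Fin (m'+1)) (x : A) (r : R),
        glin i.succ (f r * x) = ιA (f r) * glin i.succ x := by
      intro i
      refine Fin.cases ?_ (fun t => ?_) i
      · intro x r; rw [hgone, hgone, hε2, ← mul_sub, map_mul]
      · intro x r; rw [hgtwo, hgtwo, hdfx]
    have V3 : ∀ (i : Fin (m'+1)) (x : A), x ∈ Set.range ⇑f → glin i.succ x = 0 := by
      intro i
      refine Fin.cases ?_ (fun t => ?_) i
      · rintro x ⟨r, rfl⟩; rw [hgone, hε1, sub_self, map_zero]
      · rintro x ⟨r, rfl⟩; rw [hgtwo]; exact hdR r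
    let φ : MultilinearMap k (fun _ : Fin (m'+1+1) => A) W :=
      (MultilinearMap.mkPiAlgebraFin k (m'+1+1) W).compLinearMap glin
    have hφapp : ∀ a : Fin (m'+1+1) → A, φ a = (List.ofFn fun i => glin i (a i)).prod := by
      intro a
      simp only [φ, MultilinearMap.compLinearMap_apply, MultilinearMap.mkPiAlgebraFin_apply]
    have cond1 : ∀ (a : Fin (m'+1+1) → A) (j : Fin (m'+1)) (r : R),
        φ (Function.update a j.castSucc (a j.castSucc * f r))
          = φ (Function.update a j.succ (f r * a j.succ)) := by
      intro a j r
      rw [hφapp, hφapp]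
      exact GL1 (m'+1) (fun i x => glin i x) V1 V2 a j r
    have cond2 : ∀ (a : Fin (m'+1+1) → A) (j : Fin (m'+1)),
        a j.succ ∈ Set.range ⇑f → φ a = 0 := by
      intro a j hj
      rw [hφapp]
      exact GL0 _ _ j.succ (V3 j _ hj)
    obtain ⟨Φ, ⟨hΦgen, -⟩, -⟩ := huniv (m'+1) W inferInstance inferInstance φ cond1 cond2
    refine ⟨Φ, fun a => ?_⟩
    rw [hΦgen a, hφapp, ofFn3 m' (fun i => glin i (a i))]
    simp only [hg0, hgone, hgtwo]
  intro n ω hω hdω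
  obtain ⟨Φ₁, hΦ₁⟩ := hH n
  obtain ⟨Φ₂, hΦ₂⟩ := hH (n+1)
  have key : ∀ w, w ∈ Submodule.span k {w : W | ∃ a : Fin (n+1+1) → A,
      w = ιA (a 0) * (List.ofFn fun j : Fin (n+1) => d (ιA (a j.succ))).prod} →
      d (Φ₁ w) + Φ₂ (d w) = w := by
    have hsub : Submodule.span k {w : W | ∃ a : Fin (n+1+1) → A,
        w = ιA (a 0) * (List.ofFn fun j : Fin (n+1) => d (ιA (a j.succ))).prod}
        ≤ LinearMap.ker ((d ∘ₗ Φ₁ + Φ₂ ∘ₗ d) - LinearMap.id) := by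
      rw [Submodule.span_le]
      rintro w ⟨a, rfl⟩
      simp only [SetLike.mem_coe, LinearMap.mem_ker, LinearMap.sub_apply, LinearMap.add_apply,
        LinearMap.comp_apply, LinearMap.id_apply, sub_eq_zero]
      have h1 := hΦ₁ a
      have hd3 : d (ιA (a (Fin.succ 0) - ε (a (Fin.succ 0)))) = d (ιA (a (Fin.succ 0))) := by
        rw [map_sub, map_sub, hdεzero, sub_zero]
      have h2 : d (ιA (ε (a 0)) * (ιA (a (Fin.succ 0) - ε (a (Fin.succ 0)))
          * (List.ofFn fun i : Fin n => d (ιA (a i.succ.succ))).prod))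
          = ιA (ε (a 0)) * (d (ιA (a (Fin.succ 0)))
              * (List.ofFn fun i : Fin n => d (ιA (a i.succ.succ))).prod) := by
        rw [hdmul0, hdεzero, zero_mul, zero_add, hdmul0, hd3,
          hdPd n (fun i => a i.succ.succ), mul_zero, add_zero]
      have h3 : d (ιA (a 0) * (List.ofFn fun j : Fin (n+1) => d (ιA (a j.succ))).prod)
          = d (ιA (a 0)) * (List.ofFn fun j : Fin (n+1) => d (ιA (a j.succ))).prod := by
        rw [hdmul0, hdPd (n+1) (fun j => a j.succ), mul_zero, add_zero]
      have h4 : (List.ofFn fun j : Fin (n+1+1) => d (ιA (a j))).prod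
          = d (ιA (a 0)) * (List.ofFn fun j : Fin (n+1) => d (ιA (a j.succ))).prod := by
        rw [List.ofFn_succ, List.prod_cons]
      have h5 := hΦ₂ (Fin.cons 1 a)
      simp only [Fin.cons_zero, Fin.cons_succ, hε1', map_one, one_mul] at h5
      have h6 : (List.ofFn fun j : Fin (n+1) => d (ιA (a j.succ))).prod
          = d (ιA (a (Fin.succ 0)))
            * (List.ofFn fun i : Fin n => d (ιA (a i.succ.succ))).prod := by
        rw [List.ofFn_succ, List.prod_cons]
      rw [h1, h2, h3, ← h4, h5, h6, map_sub, sub_mul]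
      abel
    intro w hw
    have h := hsub hw
    have h2 := LinearMap.mem_ker.mp h
    simp only [LinearMap.sub_apply, LinearMap.add_apply, LinearMap.comp_apply,
      LinearMap.id_apply] at h2
    exact sub_eq_zero.mp h2
  refine ⟨Φ₁ ω, ?_, ?_⟩
  · have hsub2 : Submodule.span k {w : W | ∃ a : Fin (n+1+1) → A,
        w = ιA (a 0) * (List.ofFn fun j : Fin (n+1) => d (ιA (a j.succ))).prod}
        ≤ Submodule.comap Φ₁ (𝒜 n) := by
      rw [Submodule.span_le]
      rintro w ⟨a, rfl⟩
      simp only [SetLike.mem_coe, Submodule.mem_comap]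
      rw [hΦ₁ a]
      have h1 := SetLike.mul_mem_graded (hι0 (a (Fin.succ 0) - ε (a (Fin.succ 0))))
        (hPdmem n fun i => a i.succ.succ)
      have h2 := SetLike.mul_mem_graded (hι0 (ε (a 0))) h1
      simpa using h2
    exact hsub2 (hspan (n+1) hω)
  · have h := key ω (hspan (n+1) hω)
    rwa [hdω, map_zero, add_zero] at h
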